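/- Let K be a class of nonempty topological spaces. Then the following are equivalent: (1) every product of members of K (repetitions among the factors allowed) is countably compact; (2) every product of 2^{2^{ℵ₀}} many members of K (repetitions allowed) is countably compact; (3) there exists a uniform (i.e., free) ultrafilter F on ω such that every member of K is F-compact. -/

import Mathlib

universe u v

open Cardinal

/-- `p` is an `F`-limit point of the sequence `s`. -/
def FLimitPt {I : Type*} {X : Type*} [TopologicalSpace X] (F : Filter I)
    (s : I → X) (p : X) : Prop :=
  ∀ U : Set X, IsOpen U → p ∈ U → {i | s i ∈ U} ∈ F

/-- `X` is `F`-compact: every sequence indexed by the underlying set of `F`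
has an `F`-limit point. -/
def FCompact {I : Type*} (F : Filter I) (X : Type*) [TopologicalSpace X] : Prop :=
  ∀ s : I → X, ∃ p : X, FLimitPt F s p

/-- A space is countably compact if every countable open cover has a finite
subcover. -/
def CountablyCompact (X : Type*) [TopologicalSpace X] : Prop :=
  ∀ 𝒰 : Set (Set X), 𝒰.Countable → (∀ U ∈ 𝒰, IsOpen U) → ⋃₀ 𝒰 = Set.univ →
    ∃ 𝒱 ⊆ 𝒰, 𝒱.Finite ∧ ⋃₀ 𝒱 = Set.univ

/-- In a countably compact space, every sequence has a limit along some
free ultrafilter on `ℕ`. -/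
theorem cc_exists_ultra {X : Type v} [TopologicalSpace X] (hX : CountablyCompact X)
    (y : ℕ → X) : ∃ (F : Ultrafilter ℕ) (p : X),
      (∀ A ∈ F, A.Infinite) ∧ FLimitPt (F : Filter ℕ) y p := by
  classical
  set C : ℕ → Set X := fun N => closure (y '' Set.Ici N) with hCdef
  have hmem : ∃ p, ∀ N, p ∈ C N := by
    by_contra hcon
    push_neg at hcon
    obtain ⟨𝒱, hsub, hfin, hcov⟩ := hX (Set.range fun N => (C N)ᶜ)
      (Set.countable_range _)
      (by rintro U ⟨N, rfl⟩; exact isClosed_closure.isOpen_compl)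
      (by
        ext z
        simp only [Set.mem_sUnion, Set.mem_range, Set.mem_univ, iff_true]
        obtain ⟨N, hN⟩ := hcon z
        exact ⟨(C N)ᶜ, ⟨N, rfl⟩, hN⟩)
    obtain ⟨𝒱', rfl⟩ := hfin.exists_finset_coe
    set g : Set X → ℕ := fun V => if h : ∃ N, (C N)ᶜ = V then h.choose else 0 with hg
    set M : ℕ := 𝒱'.sup g with hM
    have hyM : y M ∈ C M := subset_closure ⟨M, Set.self_mem_Ici, rfl⟩
    have hyU : y M ∈ ⋃₀ (𝒱' : Set (Set X)) := by rw [hcov]; trivial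
    obtain ⟨V, hV, hyV⟩ := hyU
    have hex : ∃ N, (C N)ᶜ = V := hsub hV
    have hgV : (C (g V))ᶜ = V := by
      rw [hg]; simp only [dif_pos hex]; exact hex.choose_spec
    have hle : g V ≤ M := Finset.le_sup hV
    have hCs : C M ⊆ C (g V) :=
      closure_mono (Set.image_mono (Set.Ici_subset_Ici.mpr hle))
    rw [← hgV] at hyV
    exact hyV (hCs hyM)
  obtain ⟨p, hp⟩ := hmem
  have hGne : Filter.NeBot (Filter.comap y (nhds p) ⊓ Filter.atTop) := by
    rw [Filter.inf_neBot_iff]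
    intro s hs t ht
    obtain ⟨U, hU, hUs⟩ := Filter.mem_comap.mp hs
    obtain ⟨N, hN⟩ := Filter.mem_atTop_sets.mp ht
    obtain ⟨x, hxU, n, hn, rfl⟩ := mem_closure_iff_nhds.mp (hp N) U hU
    exact ⟨n, hUs hxU, hN n hn⟩
  obtain ⟨F, hF⟩ := Filter.exists_ultrafilter_le _ (h := hGne)
  have hF1 : (F : Filter ℕ) ≤ Filter.atTop := hF.trans inf_le_right
  refine ⟨F, p, ?_, ?_⟩
  · intro A hA
    by_contra hfin
    rw [Set.not_infinite] at hfin
    have h1 : Aᶜ ∈ Filter.atTop (α := ℕ) := by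
      rw [← Nat.cofinite_eq_atTop]; exact hfin.compl_mem_cofinite
    have h2 : Aᶜ ∈ (F : Filter ℕ) := hF1 h1
    have : (∅ : Set ℕ) ∈ (F : Filter ℕ) := by
      simpa [Set.inter_compl_self] using Filter.inter_mem hA h2
    exact Filter.empty_notMem (F : Filter ℕ) this
  · intro U hU hpU
    have : y ⁻¹' U ∈ Filter.comap y (nhds p) :=
      Filter.preimage_mem_comap (hU.mem_nhds hpU)
    exact (hF.trans inf_le_left) this

/-- Products of `F`-compact spaces are `F`-compact. -/
theorem fcompact_pi {I : Type*} {J : Type v} {X : J → Type u}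
    [∀ j, TopologicalSpace (X j)] (F : Filter I) (h : ∀ j, FCompact F (X j)) :
    FCompact F (∀ j, X j) := by
  intro s
  choose p hp using fun j => h j fun n => s n j
  refine ⟨p, ?_⟩
  intro U hU hpU
  obtain ⟨t, u, h1, h2⟩ := isOpen_pi_iff.mp hU p hpU
  refine Filter.mem_of_superset ((Filter.biInter_mem t.finite_toSet).mpr
    fun i hi => hp i (u i) (h1 i hi).1 (h1 i hi).2) ?_
  intro n hn
  apply h2
  intro i hi
  exact Set.mem_iInter₂.mp hn i hi

/-- An `F`-compact space for a free ultrafilter `F` on `ℕ` is countably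
compact. -/
theorem cc_of_fcompact {X : Type v} [TopologicalSpace X] {F : Ultrafilter ℕ}
    (hfree : ∀ A ∈ F, A.Infinite) (h : FCompact (F : Filter ℕ) X) :
    CountablyCompact X := by
  classical
  intro 𝒰 hcnt hop hcov
  rcases isEmpty_or_nonempty X with hE | hne
  · refine ⟨∅, Set.empty_subset _, Set.finite_empty, ?_⟩
    rw [Set.sUnion_empty, eq_comm, Set.univ_eq_empty_iff]
    exact hE
  by_contra hno
  push_neg at hno
  have h𝒰ne : 𝒰.Nonempty := by
    rcases Set.eq_empty_or_nonempty 𝒰 with rfl | h'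
    · rw [Set.sUnion_empty, eq_comm, Set.univ_eq_empty_iff] at hcov
      exact (hcov.false hne.some).elim
    · exact h'
  obtain ⟨f, hf⟩ := hcnt.exists_eq_range h𝒰ne
  have hxn : ∀ n, ∃ x, x ∉ ⋃₀ (f '' Set.Iic n) := by
    intro n
    have hne2 := hno (f '' Set.Iic n)
      (by rw [hf]; exact Set.image_subset_range f _) ((Set.finite_Iic n).image f)
    exact Set.ne_univ_iff_exists_notMem _ |>.mp hne2
  choose x hx using hxn
  obtain ⟨p, hp⟩ := h x
  have hpU : p ∈ ⋃₀ 𝒰 := by rw [hcov]; trivial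
  obtain ⟨U, hU𝒰, hpU'⟩ := hpU
  obtain ⟨m, rfl⟩ : ∃ m, f m = U := by rw [hf] at hU𝒰; exact hU𝒰
  have hA : {n | x n ∈ f m} ∈ (F : Filter ℕ) := hp (f m) (hop _ hU𝒰) hpU'
  have hsub : {n | x n ∈ f m} ⊆ Set.Iio m := by
    intro n hn
    by_contra hnm
    rw [Set.mem_Iio, not_lt] at hnm
    exact hx n ⟨f m, ⟨m, hnm, rfl⟩, hn⟩
  exact hfree _ hA ((Set.finite_Iio m).subset hsub)

theorem stmt_6 (K : ∀ X : Type u, TopologicalSpace X → Prop)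
    (hne : ∀ (X : Type u) (t : TopologicalSpace X), K X t → Nonempty X) :
    List.TFAE
      [ -- (1) every product of members of `K` is countably compact
        ∀ (J : Type u) (X : J → Type u) [t : ∀ j, TopologicalSpace (X j)],
          (∀ j, K (X j) (t j)) → CountablyCompact (∀ j, X j),
        -- (2) every product of `2 ^ 2 ^ ℵ₀` many members of `K` is countably
        -- compact
        ∀ (J : Type u), #J = (2 : Cardinal.{u}) ^ ((2 : Cardinal.{u}) ^ ℵ₀) →
          ∀ (X : J → Type u) [t : ∀ j, TopologicalSpace (X j)],
            (∀ j, K (X j) (t j)) → CountablyCompact (∀ j, X j),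
        -- (3) there is a uniform (i.e. free) ultrafilter `F` on `ω` such that
        -- every member of `K` is `F`-compact
        ∃ F : Ultrafilter ℕ, (∀ A ∈ F, A.Infinite) ∧
          ∀ (X : Type u) [t : TopologicalSpace X], K X t →
            FCompact (F : Filter ℕ) X ] := by
  classical
  tfae_have 1 → 2 := by
    intro h1 J _ X t hK
    exact h1 J X hK
  tfae_have 3 → 1 := by
    rintro ⟨F, hfree, hK⟩ J X t hKX
    exact cc_of_fcompact hfree (fcompact_pi _ fun j => hK (X j) (hKX j))
  tfae_have 2 → 3 := by
    intro h2
    by_contra h3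
    -- the hyperfilter is free
    set F₀ : Ultrafilter ℕ := Filter.hyperfilter ℕ with hF₀
    have hfree₀ : ∀ A ∈ F₀, A.Infinite := by
      intro A hA
      by_contra hfin
      rw [Set.not_infinite] at hfin
      exact Set.Finite.notMem_hyperfilter hfin hA
    -- for every free ultrafilter there is a counterexample
    have key : ∀ F : Ultrafilter ℕ, (∀ A ∈ F, A.Infinite) →
        ∃ (X : Type u) (t : TopologicalSpace X), K X t ∧
          ∃ s : ℕ → X, ∀ p, ¬ FLimitPt (F : Filter ℕ) s p := by
      intro F hFfree
      by_contra hc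
      push_neg at hc
      exact h3 ⟨F, hFfree, fun X t hKX s => hc X t hKX s⟩
    have key' : ∀ F : Ultrafilter ℕ,
        ∃ (X : Type u) (t : TopologicalSpace X), K X t ∧
          ∃ s : ℕ → X, (∀ A ∈ F, A.Infinite) → ∀ p, ¬ FLimitPt (F : Filter ℕ) s p := by
      intro F
      by_cases hF : ∀ A ∈ F, A.Infinite
      · obtain ⟨X, t, hKX, s, hs⟩ := key F hF
        exact ⟨X, t, hKX, s, fun _ => hs⟩
      · obtain ⟨X, t, hKX, s, _⟩ := key F₀ hfree₀
        exact ⟨X, t, hKX, s, fun h => absurd h hF⟩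
    choose X t hK s hs using key'
    -- index type of the right cardinality
    set J : Type u := Set (Set (ULift.{u} ℕ)) with hJdef
    have hJ : #J = (2 : Cardinal.{u}) ^ ((2 : Cardinal.{u}) ^ ℵ₀) := by
      rw [hJdef]
      simp [Cardinal.mk_set, Cardinal.mk_uLift]
    -- embed the ultrafilters on ℕ into J
    set e2 : Set (Set ℕ) ≃ J :=
      Equiv.Set.congr (Equiv.Set.congr (Equiv.ulift.{u}).symm) with he2
    set ι : Ultrafilter ℕ → J := fun F => e2 F.1.sets with hι
    have hιinj : Function.Injective ι := by
      intro a b hab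
      have h1 : a.1.sets = b.1.sets := e2.injective hab
      apply Ultrafilter.coe_injective
      exact Filter.filter_eq h1
    set r : J → Ultrafilter ℕ := fun j => if h : ∃ F, ι F = j then h.choose else F₀
      with hrdef
    have hr : ∀ F, r (ι F) = F := by
      intro F
      have hexr : ∃ G, ι G = ι F := ⟨F, rfl⟩
      rw [hrdef]
      simp only [dif_pos hexr]
      exact hιinj hexr.choose_spec
    -- the product space
    letI tY : ∀ j : J, TopologicalSpace (X (r j)) := fun j => t (r j)
    have hcc : CountablyCompact (∀ j : J, X (r j)) :=
      h2 J hJ (fun j => X (r j)) (fun j => hK (r j))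
    set y : ℕ → ∀ j : J, X (r j) := fun n j => s (r j) n with hy
    obtain ⟨F, p, hFfree, hFlim⟩ := cc_exists_ultra hcc y
    obtain ⟨j₀, hrj⟩ : ∃ j, r j = F := ⟨ι F, hr F⟩
    have hproj : FLimitPt (F : Filter ℕ) (fun n => y n j₀) (p j₀) := by
      intro U hU hpU
      exact hFlim ((fun z : ∀ j : J, X (r j) => z j₀) ⁻¹' U)
        (hU.preimage (continuous_apply j₀)) hpU
    rw [← hrj] at hFfree hproj
    exact hs (r j₀) hFfree (p j₀) hproj
  tfae_finish
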